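/- arXiv:2312.16690 — 4 statements merged into one kernel-verified Lean document; each statement's English description precedes it below -/
import Mathlib

section
/- Let t ≥ 0 and let a, b ∈ ℝ with a ≠ 0. Then |∫₀ᵗ e^{is(a+b)} ds − (e^{ita} − 1)/(ia) − ib·∫₀ᵗ s e^{isa} ds| ≤ t³b²/6. -/
open MeasureTheory Complex intervalIntegral

lemma exp_I_mul_hasDerivAt (s : ℝ) :
    HasDerivAt (fun y : ℝ => Complex.exp (Complex.I * y))
      (Complex.I * Complex.exp (Complex.I * s)) s := by
  have h : HasDerivAt (fun z : ℂ => Complex.exp (Complex.I * z))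
      (Complex.I * Complex.exp (Complex.I * s)) (s : ℂ) := by
    have := ((Complex.hasDerivAt_exp (Complex.I * s)).comp (s : ℂ)
      ((hasDerivAt_id (s : ℂ)).const_mul Complex.I))
    simpa [Function.comp_def, mul_comm] using this
  exact h.comp_ofReal

-- ‖e^{ix} - 1‖ ≤ |x|
lemma exp_I_sub_one_le (x : ℝ) : ‖Complex.exp (Complex.I * x) - 1‖ ≤ |x| := by
  have hderiv : ∀ s ∈ Set.uIcc (0:ℝ) x,
      HasDerivAt (fun y : ℝ => Complex.exp (Complex.I * y))
        (Complex.I * Complex.exp (Complex.I * s)) s := fun s _ => exp_I_mul_hasDerivAt s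
  have hint : IntervalIntegrable (fun s : ℝ => Complex.I * Complex.exp (Complex.I * s))
      volume 0 x := (Continuous.intervalIntegrable (by fun_prop)) _ _
  have hftc := intervalIntegral.integral_eq_sub_of_hasDerivAt hderiv hint
  have heq : Complex.exp (Complex.I * x) - 1 =
      ∫ s in (0:ℝ)..x, Complex.I * Complex.exp (Complex.I * s) := by
    simpa using hftc.symm
  rw [heq]
  calc ‖∫ s in (0:ℝ)..x, Complex.I * Complex.exp (Complex.I * s)‖
      ≤ |∫ s in (0:ℝ)..x, (1:ℝ)| := by
        apply intervalIntegral.norm_integral_le_abs_of_norm_le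
        · filter_upwards with s
          simp [Complex.norm_exp, Complex.mul_re]
        · exact (Continuous.intervalIntegrable (by fun_prop)) _ _
    _ ≤ |x| := by simp

lemma exp_I_taylor (x : ℝ) :
    ‖Complex.exp (Complex.I * x) - 1 - Complex.I * x‖ ≤ x ^ 2 / 2 := by
  have hderiv : ∀ s ∈ Set.uIcc (0:ℝ) x,
      HasDerivAt (fun y : ℝ => Complex.exp (Complex.I * y) - 1 - Complex.I * y)
        (Complex.I * (Complex.exp (Complex.I * s) - 1)) s := by
    intro s _
    have h2 : HasDerivAt (fun y : ℝ => Complex.I * (y : ℂ)) Complex.I s := by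
      have := (Complex.ofRealCLM.hasDerivAt (x := s)).const_mul Complex.I
      simpa using this
    have := ((exp_I_mul_hasDerivAt s).sub_const 1).sub h2
    convert this using 1
    · rfl
    · rfl
    · ring
  have hint : IntervalIntegrable
      (fun s : ℝ => Complex.I * (Complex.exp (Complex.I * s) - 1)) volume 0 x :=
    (Continuous.intervalIntegrable (by fun_prop)) _ _
  have hftc := intervalIntegral.integral_eq_sub_of_hasDerivAt hderiv hint
  have heq : Complex.exp (Complex.I * x) - 1 - Complex.I * x =
      ∫ s in (0:ℝ)..x, Complex.I * (Complex.exp (Complex.I * s) - 1) := by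
    simpa using hftc.symm
  rw [heq]
  have habs : |(∫ s in (0:ℝ)..x, |s|)| ≤ x ^ 2 / 2 := by
    rcases le_or_gt 0 x with hx | hx
    · have hcong : Set.EqOn (fun s : ℝ => |s|) (fun s : ℝ => s) (Set.uIcc (0:ℝ) x) := by
        intro s hs
        rw [Set.uIcc_of_le hx] at hs
        exact abs_of_nonneg hs.1
      rw [intervalIntegral.integral_congr hcong, integral_id]
      rw [show (x ^ 2 - 0 ^ 2) / 2 = x ^ 2 / 2 by ring, _root_.abs_of_nonneg (by positivity)]
    · have hcong : Set.EqOn (fun s : ℝ => |s|) (fun s : ℝ => -s) (Set.uIcc (0:ℝ) x) := by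
        intro s hs
        rw [Set.uIcc_of_ge hx.le] at hs
        exact abs_of_nonpos hs.2
      rw [intervalIntegral.integral_congr hcong, intervalIntegral.integral_neg, integral_id]
      rw [abs_neg, show (x ^ 2 - 0 ^ 2) / 2 = x ^ 2 / 2 by ring, _root_.abs_of_nonneg (by positivity)]
  refine le_trans ?_ habs
  apply intervalIntegral.norm_integral_le_abs_of_norm_le
  · filter_upwards with s
    simpa using exp_I_sub_one_le s
  · exact (Continuous.intervalIntegrable (by fun_prop)) _ _

theorem resonance_second_order_error (t a b : ℝ) (ht : 0 ≤ t) (ha : a ≠ 0) :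
    ‖(∫ s in (0:ℝ)..t, Complex.exp (Complex.I * ((s : ℂ) * ((a : ℂ) + (b : ℂ))))) -
        (Complex.exp (Complex.I * (t : ℂ) * (a : ℂ)) - 1) / (Complex.I * (a : ℂ)) -
        Complex.I * (b : ℂ) *
          ∫ s in (0:ℝ)..t, (s : ℂ) * Complex.exp (Complex.I * ((s : ℂ) * (a : ℂ)))‖ ≤
      t ^ 3 * b ^ 2 / 6 := by
  have hIa : (Complex.I * (a : ℂ)) ≠ 0 := by
    simp [Complex.I_ne_zero, Complex.ofReal_ne_zero.mpr ha]
  have h1 : (Complex.exp (Complex.I * (t : ℂ) * (a : ℂ)) - 1) / (Complex.I * (a : ℂ)) =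
      ∫ s in (0:ℝ)..t, Complex.exp (Complex.I * (a : ℂ) * (s : ℂ)) := by
    rw [integral_exp_mul_complex hIa]
    norm_num [mul_comm, mul_left_comm]
  have i1 : IntervalIntegrable
      (fun s : ℝ => Complex.exp (Complex.I * ((s : ℂ) * ((a : ℂ) + (b : ℂ))))) volume 0 t :=
    (Continuous.intervalIntegrable (by fun_prop)) _ _
  have i2 : IntervalIntegrable
      (fun s : ℝ => Complex.exp (Complex.I * (a : ℂ) * (s : ℂ))) volume 0 t :=
    (Continuous.intervalIntegrable (by fun_prop)) _ _
  have i3 : IntervalIntegrable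
      (fun s : ℝ => Complex.I * (b : ℂ) * ((s : ℂ) * Complex.exp (Complex.I * ((s : ℂ) * (a : ℂ))))) volume 0 t :=
    (Continuous.intervalIntegrable (by fun_prop)) _ _
  have hmul : Complex.I * (b : ℂ) *
      (∫ s in (0:ℝ)..t, (s : ℂ) * Complex.exp (Complex.I * ((s : ℂ) * (a : ℂ)))) =
      ∫ s in (0:ℝ)..t, Complex.I * (b : ℂ) *
        ((s : ℂ) * Complex.exp (Complex.I * ((s : ℂ) * (a : ℂ)))) := by
    rw [← intervalIntegral.integral_const_mul]
  rw [h1, hmul, ← intervalIntegral.integral_sub i1 i2,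
    ← intervalIntegral.integral_sub (i1.sub i2) i3]
  have hval : (∫ s in (0:ℝ)..t, s ^ 2 * b ^ 2 / 2) = t ^ 3 * b ^ 2 / 6 := by
    have hfe : (fun s : ℝ => s ^ 2 * b ^ 2 / 2) = fun s : ℝ => (b ^ 2 / 2) * s ^ 2 := by
      funext s; ring
    rw [hfe, intervalIntegral.integral_const_mul, integral_pow]
    ring
  calc ‖∫ s in (0:ℝ)..t,
        (Complex.exp (Complex.I * ((s : ℂ) * ((a : ℂ) + (b : ℂ)))) -
          Complex.exp (Complex.I * (a : ℂ) * (s : ℂ)) -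
          Complex.I * (b : ℂ) * ((s : ℂ) * Complex.exp (Complex.I * ((s : ℂ) * (a : ℂ)))))‖
      ≤ |∫ s in (0:ℝ)..t, s ^ 2 * b ^ 2 / 2| := by
        apply intervalIntegral.norm_integral_le_abs_of_norm_le
        · filter_upwards with s
          have key : Complex.exp (Complex.I * ((s : ℂ) * ((a : ℂ) + (b : ℂ)))) -
              Complex.exp (Complex.I * (a : ℂ) * (s : ℂ)) -
              Complex.I * (b : ℂ) * ((s : ℂ) * Complex.exp (Complex.I * ((s : ℂ) * (a : ℂ)))) =
              Complex.exp (Complex.I * ((s : ℂ) * (a : ℂ))) *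
                (Complex.exp (Complex.I * ((s * b : ℝ) : ℂ)) - 1 - Complex.I * ((s * b : ℝ) : ℂ)) := by
            rw [mul_sub, mul_sub, ← Complex.exp_add]
            push_cast
            ring_nf
          rw [key, norm_mul]
          have hone : ‖Complex.exp (Complex.I * ((s : ℂ) * (a : ℂ)))‖ = 1 := by
            rw [Complex.norm_exp]
            simp [Complex.mul_re]
          rw [hone, one_mul]
          calc ‖Complex.exp (Complex.I * ((s * b : ℝ) : ℂ)) - 1 - Complex.I * ((s * b : ℝ) : ℂ)‖
              ≤ (s * b) ^ 2 / 2 := exp_I_taylor (s * b)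
            _ = s ^ 2 * b ^ 2 / 2 := by ring
        · exact (Continuous.intervalIntegrable (by fun_prop)) _ _
    _ ≤ t ^ 3 * b ^ 2 / 6 := by
        rw [hval]
        exact le_of_eq (_root_.abs_of_nonneg (by positivity))
end

section
/- Let t > 0, σ ∈ ℝ, and p ≥ 1 a natural number. Then |((e^{itσ} − 1)/(it))^p − σ^p| ≤ p · t · |σ|^{p+1} / 2. -/
open intervalIntegral

lemma key1 (x : ℝ) : ‖Complex.exp (x * Complex.I) - 1‖ ≤ |x| := by
  have hz : Complex.exp (x * Complex.I) - 1 =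
      ((Real.cos x - 1 : ℝ) : ℂ) + ((Real.sin x : ℝ) : ℂ) * Complex.I := by
    rw [Complex.exp_mul_I, ← Complex.ofReal_cos, ← Complex.ofReal_sin]
    push_cast
    ring
  have h2 : ‖Complex.exp (x * Complex.I) - 1‖ ^ 2 ≤ |x| ^ 2 := by
    rw [hz, Complex.sq_norm, Complex.normSq_add_mul_I]
    have h1 := Real.one_sub_sq_div_two_le_cos (x := x)
    have h3 := Real.sin_sq_add_cos_sq x
    nlinarith [_root_.sq_abs x]
  exact (pow_le_pow_iff_left₀ (norm_nonneg _) (abs_nonneg _) two_ne_zero).mp h2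

lemma key2 (x : ℝ) : ‖Complex.exp (x * Complex.I) - 1 - x * Complex.I‖ ≤ x ^ 2 / 2 := by
  have h1 : ∀ s : ℝ, HasDerivAt (fun s : ℝ => (s : ℂ) * Complex.I) Complex.I s := by
    intro s
    simpa using (Complex.ofRealCLM.hasDerivAt (x := s)).mul_const Complex.I
  have hder : ∀ s ∈ Set.uIcc (0:ℝ) x,
      HasDerivAt (fun s : ℝ => Complex.exp ((s : ℂ) * Complex.I) - (s : ℂ) * Complex.I)
        (Complex.exp ((s : ℂ) * Complex.I) * Complex.I - Complex.I) s := by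
    intro s _
    exact ((h1 s).cexp).sub (h1 s)
  have hint : IntervalIntegrable
      (fun s : ℝ => Complex.exp ((s : ℂ) * Complex.I) * Complex.I - Complex.I)
      MeasureTheory.volume 0 x := by
    apply Continuous.intervalIntegrable
    fun_prop
  have heq := integral_eq_sub_of_hasDerivAt hder hint
  have hbd : ‖∫ s in (0:ℝ)..x, (Complex.exp ((s : ℂ) * Complex.I) * Complex.I - Complex.I)‖
      ≤ |∫ s in (0:ℝ)..x, |s| ∂MeasureTheory.volume| := by
    apply norm_integral_le_abs_of_norm_le
    · refine MeasureTheory.ae_of_all _ fun s => ?_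
      have : Complex.exp ((s : ℂ) * Complex.I) * Complex.I - Complex.I
          = (Complex.exp ((s : ℂ) * Complex.I) - 1) * Complex.I := by ring
      rw [this, norm_mul, Complex.norm_I, mul_one]
      exact key1 s
    · exact (continuous_abs.intervalIntegrable _ _)
  have habs : |∫ s in (0:ℝ)..x, |s| ∂MeasureTheory.volume| = x ^ 2 / 2 := by
    rcases le_or_gt 0 x with hx | hx
    · rw [integral_congr (g := fun s : ℝ => s)
        (fun s hs => abs_of_nonneg (by
          rcases Set.mem_uIcc.mp hs with h | h
          · exact h.1
          · linarith [h.1, h.2]))]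
      rw [integral_id]
      rw [abs_of_nonneg (by nlinarith [sq_nonneg x])]
      ring
    · rw [integral_congr (g := fun s : ℝ => -s)
        (fun s hs => abs_of_nonpos (by
          rcases Set.mem_uIcc.mp hs with h | h
          · linarith [h.1, h.2]
          · exact h.2))]
      rw [integral_neg, integral_id]
      rw [abs_neg, abs_of_nonneg (by nlinarith [sq_nonneg x])]
      ring
  have : Complex.exp ((x : ℂ) * Complex.I) - 1 - (x : ℂ) * Complex.I
      = ∫ s in (0:ℝ)..x, (Complex.exp ((s : ℂ) * Complex.I) * Complex.I - Complex.I) := by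
    rw [heq]; simp; ring
  rw [this]
  exact hbd.trans_eq habs

lemma pow_sub_pow_norm {a b : ℂ} {M : ℝ} (ha : ‖a‖ ≤ M) (hb : ‖b‖ ≤ M) (n : ℕ) :
    ‖a ^ (n + 1) - b ^ (n + 1)‖ ≤ (n + 1) * M ^ n * ‖a - b‖ := by
  have hM : 0 ≤ M := le_trans (norm_nonneg a) ha
  induction n with
  | zero => simp
  | succ n ih =>
    have key : a ^ (n + 2) - b ^ (n + 2)
        = a * (a ^ (n + 1) - b ^ (n + 1)) + (a - b) * b ^ (n + 1) := by ring
    have h1 : ‖a ^ (n + 2) - b ^ (n + 2)‖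
        ≤ ‖a‖ * ‖a ^ (n + 1) - b ^ (n + 1)‖ + ‖a - b‖ * ‖b‖ ^ (n + 1) := by
      rw [key]
      refine (norm_add_le _ _).trans ?_
      gcongr <;> simp [norm_mul, norm_pow]
    have hbp : ‖b‖ ^ (n + 1) ≤ M ^ (n + 1) := pow_le_pow_left₀ (norm_nonneg b) hb _
    have h2 : ‖a‖ * ‖a ^ (n + 1) - b ^ (n + 1)‖ ≤ M * ((n + 1) * M ^ n * ‖a - b‖) := by
      apply mul_le_mul ha ih (norm_nonneg _) hM
    have := norm_nonneg (a - b)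
    calc ‖a ^ (n + 2) - b ^ (n + 2)‖
        ≤ M * ((n + 1) * M ^ n * ‖a - b‖) + ‖a - b‖ * M ^ (n + 1) := by
          refine h1.trans (add_le_add h2 ?_)
          exact mul_le_mul_of_nonneg_left hbp (norm_nonneg _)
      _ = (↑(n + 1) + 1) * M ^ (n + 1) * ‖a - b‖ := by push_cast; ring

theorem filter_function_power_bound (t σ : ℝ) (ht : 0 < t) (p : ℕ) (hp : 1 ≤ p) :
    ‖((Complex.exp (Complex.I * (t : ℂ) * (σ : ℂ)) - 1) / (Complex.I * (t : ℂ))) ^ p -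
        (σ : ℂ) ^ p‖ ≤ (p : ℝ) * t * |σ| ^ (p + 1) / 2 := by
  obtain ⟨n, rfl⟩ : ∃ n, p = n + 1 := ⟨p - 1, (Nat.succ_pred_eq_of_pos hp).symm⟩
  set x := t * σ with hx
  set a : ℂ := (Complex.exp (Complex.I * (t : ℂ) * (σ : ℂ)) - 1) / (Complex.I * (t : ℂ))
    with ha
  have htne : (t : ℂ) ≠ 0 := by exact_mod_cast ht.ne'
  have hIt : (Complex.I * (t : ℂ)) ≠ 0 := mul_ne_zero Complex.I_ne_zero htne
  have hxI : Complex.I * (t : ℂ) * (σ : ℂ) = ((x : ℝ) : ℂ) * Complex.I := by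
    push_cast [hx]; ring
  have hnormIt : ‖Complex.I * (t : ℂ)‖ = t := by
    rw [norm_mul, Complex.norm_I, one_mul, Complex.norm_real, Real.norm_eq_abs,
      abs_of_pos ht]
  have h_a_sub : ‖a - (σ : ℂ)‖ ≤ t * σ ^ 2 / 2 := by
    have heq : a - (σ : ℂ)
        = (Complex.exp (((x : ℝ) : ℂ) * Complex.I) - 1 - ((x : ℝ) : ℂ) * Complex.I)
          / (Complex.I * (t : ℂ)) := by
      rw [ha, hxI]
      field_simp
      push_cast [hx]
      ring
    rw [heq, norm_div, hnormIt, div_le_iff₀ ht]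
    calc ‖Complex.exp (((x : ℝ) : ℂ) * Complex.I) - 1 - ((x : ℝ) : ℂ) * Complex.I‖
        ≤ x ^ 2 / 2 := key2 x
      _ = t * σ ^ 2 / 2 * t := by rw [hx]; ring
  have h_a_norm : ‖a‖ ≤ |σ| := by
    rw [ha, hxI, norm_div, hnormIt, div_le_iff₀ ht]
    calc ‖Complex.exp (((x : ℝ) : ℂ) * Complex.I) - 1‖ ≤ |x| := key1 x
      _ = |σ| * t := by rw [hx, abs_mul, abs_of_pos ht]; ring
  have h_sigma_norm : ‖(σ : ℂ)‖ ≤ |σ| := by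
    rw [Complex.norm_real, Real.norm_eq_abs]
  have hmain := pow_sub_pow_norm h_a_norm h_sigma_norm n
  have hσsq : σ ^ 2 = |σ| ^ 2 := (sq_abs σ).symm
  calc ‖a ^ (n + 1) - (σ : ℂ) ^ (n + 1)‖
      ≤ (n + 1) * |σ| ^ n * ‖a - (σ : ℂ)‖ := hmain
    _ ≤ (n + 1) * |σ| ^ n * (t * σ ^ 2 / 2) := by
        apply mul_le_mul_of_nonneg_left h_a_sub
        positivity
    _ = ((n + 1 : ℕ) : ℝ) * t * |σ| ^ (n + 1 + 1) / 2 := by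
        rw [hσsq]; push_cast; ring
end

section
/- Let d ≥ 1, t ≥ 0, and let k₁, k₂, k₃ ∈ ℤ^d with k₁ ≠ 0, and set k = −k₁ + k₂ + k₃. Then |∫₀ᵗ e^{is(‖k‖² + ‖k₁‖² − ‖k₂‖² − ‖k₃‖²)} ds − (e^{2it‖k₁‖²} − 1)/(2i‖k₁‖²)| ≤ t² · |⟨k₁, k₂ + k₃⟩ − ⟨k₂, k₃⟩|. -/
open MeasureTheory

/-- The embedding of `ℤ^d` into the Euclidean space `ℝ^d`. -/
noncomputable def intVec {d : ℕ} (k : Fin d → ℤ) : EuclideanSpace ℝ (Fin d) :=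
  WithLp.toLp 2 (fun i => (k i : ℝ))

lemma exp_mul_I_sub_one_norm_le (x : ℝ) : ‖Complex.exp ((x : ℂ) * Complex.I) - 1‖ ≤ |x| := by
  have h : Complex.exp ((x : ℂ) * Complex.I) - 1
      = ((Real.cos x - 1 : ℝ) : ℂ) + ((Real.sin x : ℝ) : ℂ) * Complex.I := by
    rw [Complex.exp_mul_I, ← Complex.ofReal_cos, ← Complex.ofReal_sin]
    push_cast
    ring
  rw [h]
  rw [Complex.norm_add_mul_I]
  rw [show |x| = Real.sqrt (x ^ 2) by rw [Real.sqrt_sq_eq_abs]]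
  apply Real.sqrt_le_sqrt
  have h1 := Real.sin_sq_add_cos_sq x
  have h2 := Real.one_sub_sq_div_two_le_cos (x := x)
  nlinarith

lemma intVec_norm_pos {d : ℕ} {k : Fin d → ℤ} (hk : k ≠ 0) : 0 < ‖intVec k‖ := by
  rw [norm_pos_iff]
  intro h
  apply hk
  funext i
  have h2 : ((k i : ℝ)) = 0 := by
    have : intVec k i = 0 := by rw [h]; rfl
    simpa [intVec] using this
  exact_mod_cast h2

theorem nls_resonance_discretisation_error (d : ℕ) (hd : 1 ≤ d) (t : ℝ) (ht : 0 ≤ t)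
    (k₁ k₂ k₃ : Fin d → ℤ) (hk₁ : k₁ ≠ 0) (k : Fin d → ℤ) (hk : k = -k₁ + k₂ + k₃) :
    ‖(∫ s in (0:ℝ)..t,
          Complex.exp (Complex.I * ((s : ℂ) *
            ((‖intVec k‖ ^ 2 + ‖intVec k₁‖ ^ 2 - ‖intVec k₂‖ ^ 2 - ‖intVec k₃‖ ^ 2 : ℝ) : ℂ)))) -
        (Complex.exp (2 * Complex.I * (t : ℂ) * ((‖intVec k₁‖ ^ 2 : ℝ) : ℂ)) - 1) /
          (2 * Complex.I * ((‖intVec k₁‖ ^ 2 : ℝ) : ℂ))‖ ≤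
      t ^ 2 * |(inner ℝ (intVec k₁) (intVec k₂ + intVec k₃) : ℝ) -
        (inner ℝ (intVec k₂) (intVec k₃) : ℝ)| := by
  set v₁ := intVec k₁ with hv₁
  set v₂ := intVec k₂ with hv₂
  set v₃ := intVec k₃ with hv₃
  have hvk : intVec k = -v₁ + v₂ + v₃ := by
    ext i
    simp only [hk, hv₁, hv₂, hv₃, intVec]
    push_cast [Pi.add_apply, Pi.neg_apply, PiLp.add_apply, PiLp.neg_apply]
    rfl
  set B : ℝ := 2 * ((inner ℝ v₁ (v₂ + v₃) : ℝ) - (inner ℝ v₂ v₃ : ℝ)) with hB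
  set A : ℝ := 2 * ‖v₁‖ ^ 2 with hA
  -- phase identity
  have hΩ : (‖intVec k‖ ^ 2 + ‖v₁‖ ^ 2 - ‖v₂‖ ^ 2 - ‖v₃‖ ^ 2 : ℝ) = A - B := by
    rw [hvk]
    have hn : ∀ w : EuclideanSpace ℝ (Fin d), ‖w‖ ^ 2 = (inner ℝ w w : ℝ) := fun w =>
      (real_inner_self_eq_norm_sq w).symm
    rw [hn, hn, hn, hn, hA, hB]
    simp only [inner_add_left, inner_add_right, inner_neg_left, inner_neg_right,
      real_inner_self_eq_norm_sq]
    have c12 : (inner ℝ v₁ v₂ : ℝ) = (inner ℝ v₂ v₁ : ℝ) := real_inner_comm _ _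
    have c13 : (inner ℝ v₁ v₃ : ℝ) = (inner ℝ v₃ v₁ : ℝ) := real_inner_comm _ _
    have c23 : (inner ℝ v₂ v₃ : ℝ) = (inner ℝ v₃ v₂ : ℝ) := real_inner_comm _ _
    ring_nf
    linarith
  have hApos : 0 < A := by
    have := intVec_norm_pos hk₁
    positivity
  have hAne : (Complex.I * (A : ℂ)) ≠ 0 := by
    simp [Complex.ext_iff, hApos.ne']
  -- closed form for the resonant integral
  have hclosed : (Complex.exp (2 * Complex.I * (t : ℂ) * ((‖v₁‖ ^ 2 : ℝ) : ℂ)) - 1) /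
        (2 * Complex.I * ((‖v₁‖ ^ 2 : ℝ) : ℂ))
      = ∫ s in (0:ℝ)..t, Complex.exp ((Complex.I * (A : ℂ)) * (s : ℂ)) := by
    rw [integral_exp_mul_complex hAne]
    rw [hA]
    push_cast
    rw [mul_zero, Complex.exp_zero]
    ring_nf
  rw [hΩ, hclosed]
  have hint1 : IntervalIntegrable
      (fun s : ℝ => Complex.exp (Complex.I * ((s : ℂ) * ((A - B : ℝ) : ℂ)))) volume 0 t := by
    apply Continuous.intervalIntegrable
    fun_prop
  have hint2 : IntervalIntegrable
      (fun s : ℝ => Complex.exp ((Complex.I * (A : ℂ)) * (s : ℂ))) volume 0 t := by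
    apply Continuous.intervalIntegrable
    fun_prop
  rw [← intervalIntegral.integral_sub hint1 hint2]
  have hbound : ∀ s ∈ Set.uIoc (0:ℝ) t,
      ‖Complex.exp (Complex.I * ((s : ℂ) * ((A - B : ℝ) : ℂ)))
        - Complex.exp ((Complex.I * (A : ℂ)) * (s : ℂ))‖ ≤ |B| * s := by
    intro s hs
    have hs0 : 0 ≤ s := by
      rcases Set.mem_uIoc.mp hs with h | h
      · exact h.1.le
      · exact le_trans ht h.1.le
    have hsplit : Complex.exp (Complex.I * ((s : ℂ) * ((A - B : ℝ) : ℂ)))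
        = Complex.exp ((Complex.I * (A : ℂ)) * (s : ℂ)) *
          Complex.exp (((-(s * B) : ℝ) : ℂ) * Complex.I) := by
      rw [← Complex.exp_add]
      push_cast
      ring_nf
    rw [hsplit, show Complex.exp ((Complex.I * (A : ℂ)) * (s : ℂ)) *
          Complex.exp (((-(s * B) : ℝ) : ℂ) * Complex.I)
        - Complex.exp ((Complex.I * (A : ℂ)) * (s : ℂ))
      = Complex.exp ((Complex.I * (A : ℂ)) * (s : ℂ)) *
          (Complex.exp (((-(s * B) : ℝ) : ℂ) * Complex.I) - 1) by ring]
    rw [norm_mul]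
    have h1 : ‖Complex.exp ((Complex.I * (A : ℂ)) * (s : ℂ))‖ = 1 := by
      rw [Complex.norm_exp]
      simp
    rw [h1, one_mul]
    calc ‖Complex.exp (((-(s * B) : ℝ) : ℂ) * Complex.I) - 1‖ ≤ |(-(s * B))| :=
          exp_mul_I_sub_one_norm_le _
      _ = |B| * s := by rw [abs_neg, abs_mul, abs_of_nonneg hs0]; ring
  calc ‖∫ s in (0:ℝ)..t,
        (Complex.exp (Complex.I * ((s : ℂ) * ((A - B : ℝ) : ℂ)))
          - Complex.exp ((Complex.I * (A : ℂ)) * (s : ℂ)))‖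
      ≤ |∫ s in (0:ℝ)..t, |B| * s| := by
        apply intervalIntegral.norm_integral_le_abs_of_norm_le
        · exact (ae_restrict_iff' measurableSet_uIoc).mpr (Filter.Eventually.of_forall hbound)
        · apply Continuous.intervalIntegrable
          fun_prop
    _ = t ^ 2 * |(inner ℝ v₁ (v₂ + v₃) : ℝ) - (inner ℝ v₂ v₃ : ℝ)| := by
        rw [intervalIntegral.integral_const_mul, integral_id]
        rw [abs_mul, abs_abs, hB]
        rw [show |(t ^ 2 - 0 ^ 2) / 2| = t ^ 2 / 2 by
          rw [abs_of_nonneg (by nlinarith [sq_nonneg t])]; ring]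
        rw [abs_mul, abs_two]
        ring
end

section
/- Let d ≥ 1 be an integer and let s > d/2 be a real number. Then there exists a constant C > 0, depending only on s and d, such that for all u, v : ℤ^d → ℂ with Σ_{k∈ℤ^d} (1+‖k‖²)^s |u_k|² < ∞ and Σ_{k∈ℤ^d} (1+‖k‖²)^s |v_k|² < ∞, the convolution (u*v)_k = Σ_{k₁ + k₂ = k} u_{k₁} v_{k₂} is well defined (the series converges absolutely for every k) and satisfies Σ_{k∈ℤ^d} (1+‖k‖²)^s |(u*v)_k|² ≤ C² · (Σ_{k∈ℤ^d} (1+‖k‖²)^s |u_k|²) · (Σ_{k∈ℤ^d} (1+‖k‖²)^s |v_k|²). -/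
open scoped ENNReal

namespace SobolevAux

lemma mul_le_sq_add_sq (p q : ℝ≥0∞) : p * q ≤ p ^ 2 + q ^ 2 := by
  rcases le_total p q with h | h
  · calc p * q ≤ q * q := mul_le_mul_left h q
    _ = q ^ 2 := (sq q).symm
    _ ≤ p ^ 2 + q ^ 2 := le_add_self
  · calc p * q ≤ p * p := mul_le_mul_right h p
    _ = p ^ 2 := (sq p).symm
    _ ≤ p ^ 2 + q ^ 2 := le_self_add

lemma tsum_sq {ι : Type*} (x : ι → ℝ≥0∞) :
    (∑' i, x i) ^ 2 = ∑' i, ∑' j, x i * x j := by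
  rw [sq]
  simp_rw [ENNReal.tsum_mul_left]
  rw [ENNReal.tsum_mul_right]

/-- Unweighted Cauchy-Schwarz (with a loose constant 2) for `ℝ≥0∞`-valued sums. -/
lemma cs1 {ι : Type*} (a b : ι → ℝ≥0∞) :
    (∑' i, a i * b i) ^ 2 ≤ 2 * ((∑' i, a i ^ 2) * (∑' i, b i ^ 2)) := by
  rw [tsum_sq]
  have h1 : ∀ i j : ι, (a i * b i) * (a j * b j)
      ≤ a i ^ 2 * b j ^ 2 + a j ^ 2 * b i ^ 2 := by
    intro i j
    calc (a i * b i) * (a j * b j) = (a i * b j) * (a j * b i) := by ring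
    _ ≤ (a i * b j) ^ 2 + (a j * b i) ^ 2 := mul_le_sq_add_sq _ _
    _ = a i ^ 2 * b j ^ 2 + a j ^ 2 * b i ^ 2 := by ring
  calc ∑' i, ∑' j, (a i * b i) * (a j * b j)
      ≤ ∑' i, ∑' j, (a i ^ 2 * b j ^ 2 + a j ^ 2 * b i ^ 2) :=
        ENNReal.tsum_le_tsum fun i => ENNReal.tsum_le_tsum fun j => h1 i j
    _ = ∑' i, ((∑' j, a i ^ 2 * b j ^ 2) + ∑' j, a j ^ 2 * b i ^ 2) := by
        simp_rw [ENNReal.tsum_add]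
    _ = ∑' i, (a i ^ 2 * ∑' j, b j ^ 2) + ∑' i, ((∑' j, a j ^ 2) * b i ^ 2) := by
        rw [ENNReal.tsum_add]
        congr 1 <;> refine tsum_congr fun i => ?_
        · rw [ENNReal.tsum_mul_left]
        · rw [ENNReal.tsum_mul_right]
    _ = 2 * ((∑' i, a i ^ 2) * (∑' i, b i ^ 2)) := by
        rw [ENNReal.tsum_mul_right, ENNReal.tsum_mul_left]
        ring

/-- Weighted Cauchy-Schwarz (with a loose constant 2) for `ℝ≥0∞`-valued sums. -/
lemma cs2 {ι : Type*} (f h : ι → ℝ≥0∞) :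
    (∑' i, f i * h i) ^ 2 ≤ 2 * ((∑' i, h i) * (∑' i, f i ^ 2 * h i)) := by
  rw [tsum_sq]
  have h1 : ∀ i j : ι, (f i * h i) * (f j * h j)
      ≤ f i ^ 2 * h i * h j + h i * (f j ^ 2 * h j) := by
    intro i j
    calc (f i * h i) * (f j * h j) = (f i * f j) * (h i * h j) := by ring
    _ ≤ (f i ^ 2 + f j ^ 2) * (h i * h j) :=
        mul_le_mul_left (mul_le_sq_add_sq _ _) _
    _ = f i ^ 2 * h i * h j + h i * (f j ^ 2 * h j) := by ring
  calc ∑' i, ∑' j, (f i * h i) * (f j * h j)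
      ≤ ∑' i, ∑' j, (f i ^ 2 * h i * h j + h i * (f j ^ 2 * h j)) :=
        ENNReal.tsum_le_tsum fun i => ENNReal.tsum_le_tsum fun j => h1 i j
    _ = ∑' i, ((f i ^ 2 * h i) * ∑' j, h j) + ∑' i, (h i * ∑' j, f j ^ 2 * h j) := by
        simp_rw [ENNReal.tsum_add, ENNReal.tsum_mul_left]
    _ = 2 * ((∑' i, h i) * (∑' i, f i ^ 2 * h i)) := by
        rw [ENNReal.tsum_mul_right, ENNReal.tsum_mul_right]
        ring

/-- ℓ¹-ℓ² Young inequality (loose constant) for convolutions on an additive group. -/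
lemma young {G : Type*} [AddCommGroup G] (f h : G → ℝ≥0∞) :
    ∑' k, (∑' j, f j * h (k - j)) ^ 2 ≤ 2 * ((∑' j, h j) ^ 2 * ∑' j, f j ^ 2) := by
  have hH : ∀ k : G, ∑' j, h (k - j) = ∑' j, h j := fun k =>
    (Equiv.subLeft k).tsum_eq h
  calc ∑' k, (∑' j, f j * h (k - j)) ^ 2
      ≤ ∑' k, 2 * ((∑' j, h (k - j)) * ∑' j, f j ^ 2 * h (k - j)) :=
        ENNReal.tsum_le_tsum fun k => cs2 f (fun j => h (k - j))
    _ = 2 * ((∑' j, h j) * ∑' k, ∑' j, f j ^ 2 * h (k - j)) := by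
        simp_rw [hH]
        rw [ENNReal.tsum_mul_left, ENNReal.tsum_mul_left]
    _ = 2 * ((∑' j, h j) * ∑' j, f j ^ 2 * ∑' k, h (k - j)) := by
        congr 2
        rw [ENNReal.tsum_comm]
        exact tsum_congr fun j => ENNReal.tsum_mul_left
    _ = 2 * ((∑' j, h j) * ∑' j, f j ^ 2 * ∑' k, h k) := by
        congr 2
        exact tsum_congr fun j => by rw [show (∑' (k : G), h (k - j)) = ∑' (k : G), h k from (Equiv.subRight j).tsum_eq h]
    _ = 2 * ((∑' j, h j) ^ 2 * ∑' j, f j ^ 2) := by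
        rw [ENNReal.tsum_mul_right]
        ring

end SobolevAux

namespace SobolevAux

lemma norm_sq_intVec {d : ℕ} (k : Fin d → ℤ) :
    ‖intVec k‖ ^ 2 = ∑ i, ((k i : ℝ)) ^ 2 := by
  rw [EuclideanSpace.norm_eq]
  rw [Real.sq_sqrt (by positivity)]
  refine Finset.sum_congr rfl fun i _ => ?_
  simp [intVec]

lemma intVec_add {d : ℕ} (a b : Fin d → ℤ) : intVec (a + b) = intVec a + intVec b := by
  ext i
  show (((a + b) i : ℤ) : ℝ) = (a i : ℝ) + (b i : ℝ)
  push_cast [Pi.add_apply]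
  ring

/-- Peetre-type inequality. -/
lemma peetre {d : ℕ} {t : ℝ} (ht : 0 ≤ t) (a b : Fin d → ℤ) :
    (1 + ‖intVec (a + b)‖ ^ 2) ^ t ≤
      4 ^ t * ((1 + ‖intVec a‖ ^ 2) ^ t + (1 + ‖intVec b‖ ^ 2) ^ t) := by
  set x := ‖intVec a‖ with hx
  set y := ‖intVec b‖ with hy
  have hx0 : 0 ≤ x := norm_nonneg _
  have hy0 : 0 ≤ y := norm_nonneg _
  have htri : ‖intVec (a + b)‖ ≤ x + y := by
    rw [intVec_add]; exact norm_add_le _ _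
  set M := max (1 + x ^ 2) (1 + y ^ 2) with hM
  have h1 : 1 + ‖intVec (a + b)‖ ^ 2 ≤ 4 * M := by
    have hz0 : 0 ≤ ‖intVec (a + b)‖ := norm_nonneg _
    rcases le_total x y with h | h
    · have : M = max (1 + x ^ 2) (1 + y ^ 2) := hM
      have hMy : 1 + y ^ 2 ≤ M := le_max_right _ _
      nlinarith [sq_nonneg (x - y), sq_nonneg (x + y)]
    · have hMx : 1 + x ^ 2 ≤ M := le_max_left _ _
      nlinarith [sq_nonneg (x - y), sq_nonneg (x + y)]
  have h2 : (1 + ‖intVec (a + b)‖ ^ 2) ^ t ≤ (4 * M) ^ t :=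
    Real.rpow_le_rpow (by positivity) h1 ht
  have hM0 : 0 ≤ M := le_trans (by positivity) (le_max_left (1 + x ^ 2) _)
  have h3 : (4 * M) ^ t = 4 ^ t * M ^ t := Real.mul_rpow (by norm_num) hM0
  have h4 : M ^ t ≤ (1 + x ^ 2) ^ t + (1 + y ^ 2) ^ t := by
    rcases max_cases (1 + x ^ 2) (1 + y ^ 2) with ⟨hMe, _⟩ | ⟨hMe, _⟩ <;> rw [hM, hMe]
    · exact le_add_of_nonneg_right (by positivity)
    · exact le_add_of_nonneg_left (by positivity)
  calc (1 + ‖intVec (a + b)‖ ^ 2) ^ t ≤ (4 * M) ^ t := h2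
    _ = 4 ^ t * M ^ t := h3
    _ ≤ 4 ^ t * ((1 + x ^ 2) ^ t + (1 + y ^ 2) ^ t) := by
        refine mul_le_mul_of_nonneg_left h4 (by positivity)

/-- 1-d summability. -/
lemma summable_one_dim {t : ℝ} (ht : 1 / 2 < t) :
    Summable fun n : ℤ => (1 + (n : ℝ) ^ 2) ^ (-t) := by
  have h2t : 1 < 2 * t := by linarith
  have hmaj : Summable fun n : ℤ => |(n : ℝ)| ^ (-(2 * t)) := Real.summable_abs_int_rpow h2t
  have hf1 : Summable fun n : ℤ => if n = 0 then (0:ℝ) else (1 + (n : ℝ) ^ 2) ^ (-t) := by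
    refine Summable.of_nonneg_of_le (fun n => ?_) (fun n => ?_) hmaj
    · split <;> positivity
    · by_cases hn : n = 0
      · simp [hn]
        positivity
      · simp only [hn, if_false]
        have hn1 : (1 : ℝ) ≤ |(n : ℝ)| := by
          rw [← Int.cast_abs]
          exact_mod_cast Int.one_le_abs (by exact_mod_cast hn)
        have hnpos : (0:ℝ) < (n:ℝ) ^ 2 := by positivity
        have hle : ((n:ℝ) ^ 2 : ℝ) ≤ 1 + (n:ℝ) ^ 2 := by linarith
        calc (1 + (n : ℝ) ^ 2) ^ (-t) ≤ ((n:ℝ) ^ 2) ^ (-t) :=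
              Real.rpow_le_rpow_of_nonpos hnpos hle (by linarith)
          _ = |(n : ℝ)| ^ (-(2 * t)) := by
              rw [← sq_abs, ← Real.rpow_natCast |(n:ℝ)| 2, ← Real.rpow_mul (abs_nonneg _)]
              norm_num
  have hf0 : Summable fun n : ℤ => if n = 0 then (1 + (n : ℝ) ^ 2) ^ (-t) else (0:ℝ) := by
    apply summable_of_ne_finset_zero (s := {(0:ℤ)})
    intro n hn
    simp only [Finset.mem_singleton] at hn
    simp [hn]
  have := hf0.add hf1
  refine this.congr fun n => ?_
  by_cases hn : n = 0 <;> simp [hn]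

lemma tsum_pi_prod (g : ℤ → ℝ≥0∞) : ∀ n : ℕ,
    ∑' k : Fin n → ℤ, ∏ i, g (k i) = (∑' m : ℤ, g m) ^ n := by
  intro n
  induction n with
  | zero =>
      rw [tsum_eq_single (fun i => 0) (fun b hb => absurd (Subsingleton.elim b _) hb)]
      simp
  | succ n ih =>
      rw [← (Fin.consEquiv fun _ => ℤ).tsum_eq]
      have : ∀ p : ℤ × (Fin n → ℤ),
          (∏ i, g (((Fin.consEquiv fun _ => ℤ) p) i)) = g p.1 * ∏ i, g (p.2 i) := by
        intro p
        rw [Fin.prod_univ_succ]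
        simp [Fin.consEquiv]
      rw [tsum_congr this, ENNReal.tsum_prod']
      simp_rw [ENNReal.tsum_mul_left]
      rw [ENNReal.tsum_mul_right, ih, pow_succ]
      ring

end SobolevAux

namespace SobolevAux

lemma prod_bound {d : ℕ} (hd : 1 ≤ d) {s : ℝ} (hs0 : 0 ≤ s) (k : Fin d → ℤ) :
    (1 + ‖intVec k‖ ^ 2) ^ (-s) ≤ ∏ i, (1 + ((k i : ℝ)) ^ 2) ^ (-(s / d)) := by
  have hdpos : (0:ℝ) < d := by exact_mod_cast hd
  set x : Fin d → ℝ := fun i => 1 + ((k i : ℝ)) ^ 2 with hxdef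
  have hx1 : ∀ i, (1:ℝ) ≤ x i := fun i => by simp [hxdef]; positivity
  have hxpos : ∀ i, (0:ℝ) < x i := fun i => lt_of_lt_of_le one_pos (hx1 i)
  have hP : (∏ i, x i ^ ((d:ℝ))⁻¹) ≤ 1 + ‖intVec k‖ ^ 2 := by
    have amgm := Real.geom_mean_le_arith_mean_weighted Finset.univ
      (fun _ : Fin d => ((d:ℝ))⁻¹) x (fun i _ => by positivity)
      (by simp [Finset.card_univ]; field_simp) (fun i _ => (hxpos i).le)
    refine amgm.trans ?_
    rw [norm_sq_intVec]
    have : ∑ i, ((d:ℝ))⁻¹ * x i = 1 + (d:ℝ)⁻¹ * ∑ i, ((k i : ℝ)) ^ 2 := by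
      simp only [hxdef, mul_add, Finset.sum_add_distrib, mul_one, Finset.mul_sum]
      congr 1
      · simp [Finset.card_univ]
        field_simp
    rw [this]
    have hsum : (0:ℝ) ≤ ∑ i, ((k i : ℝ)) ^ 2 := by positivity
    have : (d:ℝ)⁻¹ ≤ 1 := by
      rw [inv_le_one_iff₀]; right; exact_mod_cast hd
    nlinarith
  have hPs : (∏ i, x i ^ (s / d)) ≤ (1 + ‖intVec k‖ ^ 2) ^ s := by
    have h1 : ((∏ i, x i ^ ((d:ℝ))⁻¹) : ℝ) ^ s ≤ (1 + ‖intVec k‖ ^ 2) ^ s :=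
      Real.rpow_le_rpow (Finset.prod_nonneg fun i _ => by positivity) hP hs0
    calc (∏ i, x i ^ (s / d)) = ∏ i, (x i ^ ((d:ℝ))⁻¹) ^ s := by
          refine Finset.prod_congr rfl fun i _ => ?_
          rw [← Real.rpow_mul (hxpos i).le]
          congr 1
          field_simp
      _ = (∏ i, x i ^ ((d:ℝ))⁻¹) ^ s :=
          Real.finset_prod_rpow Finset.univ _ (fun i _ => by positivity) s
      _ ≤ (1 + ‖intVec k‖ ^ 2) ^ s := h1
  have hprodpos : (0:ℝ) < ∏ i, x i ^ (s / d) :=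
    Finset.prod_pos fun i _ => Real.rpow_pos_of_pos (hxpos i) _
  have hbase : (0:ℝ) < 1 + ‖intVec k‖ ^ 2 := by positivity
  calc (1 + ‖intVec k‖ ^ 2) ^ (-s) = ((1 + ‖intVec k‖ ^ 2) ^ s)⁻¹ := by
        rw [Real.rpow_neg hbase.le]
    _ ≤ (∏ i, x i ^ (s / d))⁻¹ := by
        exact inv_anti₀ hprodpos hPs
    _ = ∏ i, (x i ^ (s / d))⁻¹ := by rw [Finset.prod_inv_distrib]
    _ = ∏ i, (1 + ((k i : ℝ)) ^ 2) ^ (-(s / d)) := by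
        refine Finset.prod_congr rfl fun i _ => ?_
        rw [Real.rpow_neg (hxpos i).le]

lemma lattice_summable {d : ℕ} (hd : 1 ≤ d) {s : ℝ} (hs : (d : ℝ) / 2 < s) :
    (∑' k : Fin d → ℤ, ENNReal.ofReal ((1 + ‖intVec k‖ ^ 2) ^ (-s))) ≠ ∞ := by
  have hdpos : (0:ℝ) < d := by exact_mod_cast hd
  have hs0 : 0 < s := lt_of_le_of_lt (by positivity) hs
  have ht : 1 / 2 < s / d := by
    rw [div_lt_div_iff₀ (by norm_num) hdpos] at *
    nlinarith
  have h1d := summable_one_dim ht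
  have hg : (∑' m : ℤ, ENNReal.ofReal ((1 + (m : ℝ) ^ 2) ^ (-(s / d)))) ≠ ∞ := by
    rw [← ENNReal.ofReal_tsum_of_nonneg (fun n => by positivity) h1d]
    exact ENNReal.ofReal_ne_top
  refine ne_top_of_le_ne_top (ENNReal.pow_ne_top (n := d) hg) ?_
  rw [← tsum_pi_prod]
  refine ENNReal.tsum_le_tsum fun k => ?_
  calc ENNReal.ofReal ((1 + ‖intVec k‖ ^ 2) ^ (-s))
      ≤ ENNReal.ofReal (∏ i, (1 + ((k i : ℝ)) ^ 2) ^ (-(s / d))) :=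
        ENNReal.ofReal_le_ofReal (prod_bound hd hs0.le k)
    _ = ∏ i, ENNReal.ofReal ((1 + ((k i : ℝ)) ^ 2) ^ (-(s / d))) :=
        ENNReal.ofReal_prod_of_nonneg (fun i _ => by positivity)

end SobolevAux
open SobolevAux

theorem sobolev_algebra_fourier (d : ℕ) (hd : 1 ≤ d) (s : ℝ) (hs : (d : ℝ) / 2 < s) :
    ∃ C : ℝ, 0 < C ∧ ∀ u v : (Fin d → ℤ) → ℂ,
      Summable (fun k : Fin d → ℤ => (1 + ‖intVec k‖ ^ 2) ^ s * ‖u k‖ ^ 2) →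
      Summable (fun k : Fin d → ℤ => (1 + ‖intVec k‖ ^ 2) ^ s * ‖v k‖ ^ 2) →
      (∀ k : Fin d → ℤ, Summable fun k₁ : Fin d → ℤ => ‖u k₁ * v (k - k₁)‖) ∧
      Summable (fun k : Fin d → ℤ =>
        (1 + ‖intVec k‖ ^ 2) ^ s * ‖∑' k₁ : Fin d → ℤ, u k₁ * v (k - k₁)‖ ^ 2) ∧
      ∑' k : Fin d → ℤ,
          (1 + ‖intVec k‖ ^ 2) ^ s * ‖∑' k₁ : Fin d → ℤ, u k₁ * v (k - k₁)‖ ^ 2 ≤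
        C ^ 2 * (∑' k : Fin d → ℤ, (1 + ‖intVec k‖ ^ 2) ^ s * ‖u k‖ ^ 2) *
          (∑' k : Fin d → ℤ, (1 + ‖intVec k‖ ^ 2) ^ s * ‖v k‖ ^ 2) := by
  classical
  have hdpos : (0:ℝ) < d := by exact_mod_cast hd
  have hs0 : 0 < s := lt_of_le_of_lt (by positivity) hs
  -- weights
  set wt : (Fin d → ℤ) → ℝ := fun k => (1 + ‖intVec k‖ ^ 2) ^ s with hwt
  have hwtpos : ∀ k, 0 < wt k := fun k => Real.rpow_pos_of_pos (by positivity) _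
  set W : (Fin d → ℤ) → ℝ≥0∞ := fun k => ENNReal.ofReal (wt k) with hW
  set w : (Fin d → ℤ) → ℝ≥0∞ :=
    fun k => ENNReal.ofReal ((1 + ‖intVec k‖ ^ 2) ^ (s / 2)) with hw
  have hWw : ∀ k, W k = w k ^ 2 := by
    intro k
    have hb : (0:ℝ) < 1 + ‖intVec k‖ ^ 2 := by positivity
    have : wt k = ((1 + ‖intVec k‖ ^ 2) ^ (s / 2)) ^ (2:ℕ) := by
      rw [← Real.rpow_natCast ((1 + ‖intVec k‖ ^ 2) ^ (s / 2)) 2,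
        ← Real.rpow_mul hb.le]
      norm_num
      rfl
    show ENNReal.ofReal (wt k) = ENNReal.ofReal ((1 + ‖intVec k‖ ^ 2) ^ (s / 2)) ^ 2
    rw [this, ENNReal.ofReal_pow (by positivity)]
  have hwpos : ∀ k, w k ≠ 0 := fun k => by
    simp only [hw, ne_eq, ENNReal.ofReal_eq_zero, not_le]
    positivity
  have hwtop : ∀ k, w k ≠ ∞ := fun k => ENNReal.ofReal_ne_top
  have hWtop : ∀ k, W k ≠ ∞ := fun k => ENNReal.ofReal_ne_top
  have hW1 : ∀ k, 1 ≤ W k := by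
    intro k
    rw [hW, ← ENNReal.ofReal_one]
    exact ENNReal.ofReal_le_ofReal (Real.one_le_rpow (by nlinarith [norm_nonneg (intVec k), sq_nonneg ‖intVec k‖]) hs0.le)
  have hWinv : ∀ k, (W k)⁻¹ = ENNReal.ofReal ((1 + ‖intVec k‖ ^ 2) ^ (-s)) := by
    intro k
    rw [Real.rpow_neg (by positivity), ENNReal.ofReal_inv_of_pos (hwtpos k)]
  -- the lattice constant
  set K2 : ℝ≥0∞ := ∑' k : Fin d → ℤ, (W k)⁻¹ with hK2def
  have hK2 : K2 ≠ ∞ := by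
    rw [hK2def]
    simp_rw [hWinv]
    exact lattice_summable hd hs
  -- Peetre constant
  set c₀ : ℝ≥0∞ := ENNReal.ofReal (4 ^ (s / 2)) with hc₀
  have hc₀top : c₀ ≠ ∞ := ENNReal.ofReal_ne_top
  have hpeetre : ∀ a b : Fin d → ℤ, w (a + b) ≤ c₀ * (w a + w b) := by
    intro a b
    have := peetre (d := d) (t := s / 2) (by positivity) a b
    calc w (a + b) ≤ ENNReal.ofReal (4 ^ (s / 2) *
          ((1 + ‖intVec a‖ ^ 2) ^ (s / 2) + (1 + ‖intVec b‖ ^ 2) ^ (s / 2))) :=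
          ENNReal.ofReal_le_ofReal this
      _ = c₀ * (w a + w b) := by
          rw [ENNReal.ofReal_mul (by positivity), ENNReal.ofReal_add (by positivity) (by positivity)]
  set M : ℝ≥0∞ := 32 * c₀ ^ 2 * K2 with hM
  have hMtop : M ≠ ∞ := by
    rw [hM]
    exact ENNReal.mul_ne_top (ENNReal.mul_ne_top (by norm_num) (by
      exact ENNReal.pow_ne_top hc₀top)) hK2
  refine ⟨Real.sqrt (M.toReal + 1), Real.sqrt_pos.mpr (by positivity), ?_⟩
  have hCsq : Real.sqrt (M.toReal + 1) ^ 2 = M.toReal + 1 :=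
    Real.sq_sqrt (by positivity)
  intro u v hu hv
  -- ENNReal versions
  set Fu : (Fin d → ℤ) → ℝ≥0∞ := fun k => ENNReal.ofReal ‖u k‖ with hFu
  set Fv : (Fin d → ℤ) → ℝ≥0∞ := fun k => ENNReal.ofReal ‖v k‖ with hFv
  set A : ℝ≥0∞ := ∑' k, W k * Fu k ^ 2 with hA
  set B : ℝ≥0∞ := ∑' k, W k * Fv k ^ 2 with hB
  have hA_eq : A = ENNReal.ofReal (∑' k, wt k * ‖u k‖ ^ 2) := by
    rw [ENNReal.ofReal_tsum_of_nonneg (fun k => by positivity) hu]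
    exact tsum_congr fun k => by
      rw [ENNReal.ofReal_mul (hwtpos k).le, ENNReal.ofReal_pow (norm_nonneg _)]
  have hB_eq : B = ENNReal.ofReal (∑' k, wt k * ‖v k‖ ^ 2) := by
    rw [ENNReal.ofReal_tsum_of_nonneg (fun k => by positivity) hv]
    exact tsum_congr fun k => by
      rw [ENNReal.ofReal_mul (hwtpos k).le, ENNReal.ofReal_pow (norm_nonneg _)]
  have hAtop : A ≠ ∞ := by rw [hA_eq]; exact ENNReal.ofReal_ne_top
  have hBtop : B ≠ ∞ := by rw [hB_eq]; exact ENNReal.ofReal_ne_top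
  have hFu2 : ∑' k, Fu k ^ 2 ≤ A :=
    ENNReal.tsum_le_tsum fun k => by
      conv_lhs => rw [← one_mul (Fu k ^ 2)]
      exact mul_le_mul_left (hW1 k) _
  have hFv2 : ∑' k, Fv k ^ 2 ≤ B :=
    ENNReal.tsum_le_tsum fun k => by
      conv_lhs => rw [← one_mul (Fv k ^ 2)]
      exact mul_le_mul_left (hW1 k) _
  -- ℓ¹ bounds
  have hℓ1 : ∀ (F : (Fin d → ℤ) → ℝ≥0∞) (T : ℝ≥0∞), (∑' k, W k * F k ^ 2) = T →
      (∑' k, F k) ^ 2 ≤ 2 * (K2 * T) := by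
    intro F T hT
    have hid : ∀ k, F k = (w k)⁻¹ * (w k * F k) := by
      intro k
      rw [← mul_assoc, ENNReal.inv_mul_cancel (hwpos k) (hwtop k), one_mul]
    calc (∑' k, F k) ^ 2 = (∑' k, (w k)⁻¹ * (w k * F k)) ^ 2 := by
          rw [tsum_congr hid]
      _ ≤ 2 * ((∑' k, ((w k)⁻¹) ^ 2) * (∑' k, (w k * F k) ^ 2)) := cs1 _ _
      _ = 2 * (K2 * T) := by
          rw [← hT, hK2def]
          congr 1
          congr 1
          · exact tsum_congr fun k => by rw [← ENNReal.inv_pow, ← hWw k]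
          · exact tsum_congr fun k => by rw [mul_pow, ← hWw k]
  have hHu : (∑' k, Fu k) ^ 2 ≤ 2 * (K2 * A) := hℓ1 Fu A rfl
  have hHv : (∑' k, Fv k) ^ 2 ≤ 2 * (K2 * B) := hℓ1 Fv B rfl
  -- convolution
  set conv : (Fin d → ℤ) → ℝ≥0∞ := fun k => ∑' j, Fu j * Fv (k - j) with hconv
  have hconv_sq : ∀ k, conv k ^ 2 ≤ 2 * (A * B) := by
    intro k
    calc conv k ^ 2 ≤ 2 * ((∑' j, Fu j ^ 2) * (∑' j, Fv (k - j) ^ 2)) := cs1 _ _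
      _ ≤ 2 * (A * B) := by
          refine mul_le_mul_right (mul_le_mul' hFu2 ?_) 2
          calc ∑' j, Fv (k - j) ^ 2 = ∑' j, Fv j ^ 2 := by
                exact show (∑' (c : Fin d → ℤ), Fv ((Equiv.subLeft k) c) ^ 2) = _ from
                  (Equiv.subLeft k).tsum_eq fun j => Fv j ^ 2
            _ ≤ B := hFv2
  have hconv_top : ∀ k, conv k ≠ ∞ := by
    intro k h
    have h2 : conv k ^ 2 < ∞ := lt_of_le_of_lt (hconv_sq k)
      (ENNReal.mul_ne_top (by norm_num) (ENNReal.mul_ne_top hAtop hBtop)).lt_top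
    rw [h] at h2
    rw [ENNReal.top_pow (by norm_num)] at h2
    exact (lt_irrefl _ h2)
  -- key pointwise bound
  have key : ∀ k, w k * conv k ≤
      c₀ * ((∑' j, (w j * Fu j) * Fv (k - j)) + ∑' j, Fu j * (w (k - j) * Fv (k - j))) := by
    intro k
    have h1 : w k * conv k = ∑' j, w k * (Fu j * Fv (k - j)) := ENNReal.tsum_mul_left.symm
    rw [h1]
    have h2 : ∀ j, w k * (Fu j * Fv (k - j)) ≤
        c₀ * ((w j * Fu j) * Fv (k - j) + Fu j * (w (k - j) * Fv (k - j))) := by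
      intro j
      have hk : j + (k - j) = k := by abel
      have hp : w k ≤ c₀ * (w j + w (k - j)) := by
        conv_lhs => rw [← hk]
        exact hpeetre j (k - j)
      calc w k * (Fu j * Fv (k - j)) ≤ (c₀ * (w j + w (k - j))) * (Fu j * Fv (k - j)) :=
            mul_le_mul_left hp _
        _ = c₀ * ((w j * Fu j) * Fv (k - j) + Fu j * (w (k - j) * Fv (k - j))) := by ring
    calc (∑' j, w k * (Fu j * Fv (k - j)))
        ≤ ∑' j, c₀ * ((w j * Fu j) * Fv (k - j) + Fu j * (w (k - j) * Fv (k - j))) :=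
          ENNReal.tsum_le_tsum h2
      _ = c₀ * ((∑' j, (w j * Fu j) * Fv (k - j)) + ∑' j, Fu j * (w (k - j) * Fv (k - j))) := by
          simp_rw [mul_add]
          rw [ENNReal.tsum_add]
          congr 1 <;> rw [ENNReal.tsum_mul_left]
  have sq_add : ∀ a b : ℝ≥0∞, (a + b) ^ 2 ≤ 4 * (a ^ 2 + b ^ 2) := by
    intro a b
    have h := mul_le_sq_add_sq a b
    calc (a + b) ^ 2 = a ^ 2 + 2 * (a * b) + b ^ 2 := by ring
      _ ≤ a ^ 2 + 2 * (a ^ 2 + b ^ 2) + b ^ 2 := by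
          exact add_le_add_left (add_le_add_right (mul_le_mul_right h 2) _) _
      _ = 3 * (a ^ 2 + b ^ 2) := by ring
      _ ≤ 4 * (a ^ 2 + b ^ 2) := mul_le_mul_left (by norm_num) _
  set X : (Fin d → ℤ) → ℝ≥0∞ := fun k => ∑' j, (w j * Fu j) * Fv (k - j) with hX
  set Y : (Fin d → ℤ) → ℝ≥0∞ := fun k => ∑' j, Fu j * (w (k - j) * Fv (k - j)) with hY
  have hwFu : (∑' j, (w j * Fu j) ^ 2) = A :=
    tsum_congr fun j => by rw [mul_pow, ← hWw]
  have hwFv : (∑' j, (w j * Fv j) ^ 2) = B :=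
    tsum_congr fun j => by rw [mul_pow, ← hWw]
  have hSX : ∑' k, X k ^ 2 ≤ 2 * ((∑' j, Fv j) ^ 2 * A) := by
    rw [← hwFu]
    exact young (fun j => w j * Fu j) Fv
  have hY_eq : ∀ k, Y k = ∑' j, (w j * Fv j) * Fu (k - j) := by
    intro k
    show (∑' j, Fu j * (w (k - j) * Fv (k - j))) = _
    rw [show (∑' j, Fu j * (w (k - j) * Fv (k - j)))
        = ∑' c, (fun j => Fu j * (w (k - j) * Fv (k - j))) ((Equiv.subLeft k) c) from
      ((Equiv.subLeft k).tsum_eq (fun j => Fu j * (w (k - j) * Fv (k - j)))).symm]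
    refine tsum_congr fun j => ?_
    show Fu (k - j) * (w (k - (k - j)) * Fv (k - (k - j))) = (w j * Fv j) * Fu (k - j)
    rw [sub_sub_cancel]
    ring
  have hSY : ∑' k, Y k ^ 2 ≤ 2 * ((∑' j, Fu j) ^ 2 * B) := by
    rw [← hwFv]
    calc ∑' k, Y k ^ 2 = ∑' k, (∑' j, (w j * Fv j) * Fu (k - j)) ^ 2 := by
          exact tsum_congr fun k => by rw [hY_eq k]
      _ ≤ 2 * ((∑' j, Fu j) ^ 2 * ∑' j, (w j * Fv j) ^ 2) :=
          young (fun j => w j * Fv j) Fu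
  set S : ℝ≥0∞ := ∑' k, W k * conv k ^ 2 with hS_def
  have hS : S ≤ M * (A * B) := by
    have step1 : S = ∑' k, (w k * conv k) ^ 2 :=
      tsum_congr fun k => by rw [mul_pow, hWw]
    have step2 : ∑' k, (w k * conv k) ^ 2 ≤ c₀ ^ 2 * ∑' k, (X k + Y k) ^ 2 := by
      rw [← ENNReal.tsum_mul_left]
      refine ENNReal.tsum_le_tsum fun k => ?_
      calc (w k * conv k) ^ 2 ≤ (c₀ * (X k + Y k)) ^ 2 := pow_le_pow_left' (key k) 2
        _ = c₀ ^ 2 * (X k + Y k) ^ 2 := by ring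
    have step3 : ∑' k, (X k + Y k) ^ 2 ≤ 4 * ((∑' k, X k ^ 2) + ∑' k, Y k ^ 2) := by
      rw [← ENNReal.tsum_add, ← ENNReal.tsum_mul_left]
      exact ENNReal.tsum_le_tsum fun k => sq_add (X k) (Y k)
    have step4 : (∑' k, X k ^ 2) + ∑' k, Y k ^ 2
        ≤ 2 * ((2 * (K2 * B)) * A) + 2 * ((2 * (K2 * A)) * B) := by
      refine add_le_add (hSX.trans ?_) (hSY.trans ?_)
      · exact mul_le_mul_right (mul_le_mul_left hHv A) 2
      · exact mul_le_mul_right (mul_le_mul_left hHu B) 2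
    calc S = ∑' k, (w k * conv k) ^ 2 := step1
      _ ≤ c₀ ^ 2 * ∑' k, (X k + Y k) ^ 2 := step2
      _ ≤ c₀ ^ 2 * (4 * ((∑' k, X k ^ 2) + ∑' k, Y k ^ 2)) := mul_le_mul_right step3 _
      _ ≤ c₀ ^ 2 * (4 * (2 * ((2 * (K2 * B)) * A) + 2 * ((2 * (K2 * A)) * B))) :=
          mul_le_mul_right (mul_le_mul_right step4 4) _
      _ = M * (A * B) := by rw [hM]; ring
  -- conclusions
  have hnorm_eq : ∀ k, Summable (fun j : Fin d → ℤ => ‖u j * v (k - j)‖) ∧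
      (∑' j, ‖u j * v (k - j)‖) = (conv k).toReal := by
    intro k
    have hterm : ∀ j, Fu j * Fv (k - j) = ENNReal.ofReal ‖u j * v (k - j)‖ := fun j => by
      rw [norm_mul, ENNReal.ofReal_mul (norm_nonneg _)]
    have hc : conv k = ∑' j, ENNReal.ofReal ‖u j * v (k - j)‖ := tsum_congr hterm
    have hsum : Summable fun j : Fin d → ℤ => ‖u j * v (k - j)‖ := by
      have h := ENNReal.summable_toReal (f := fun j => ENNReal.ofReal ‖u j * v (k - j)‖)
        (by rw [← hc]; exact hconv_top k)
      refine h.congr fun j => ?_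
      rw [ENNReal.toReal_ofReal (norm_nonneg _)]
    refine ⟨hsum, ?_⟩
    rw [hc, ENNReal.tsum_toReal_eq (fun j => ENNReal.ofReal_ne_top)]
    exact (tsum_congr fun j => (ENNReal.toReal_ofReal (norm_nonneg _)).symm)
  have hbound : ∀ k, wt k * ‖∑' j : Fin d → ℤ, u j * v (k - j)‖ ^ 2
      ≤ (W k * conv k ^ 2).toReal := by
    intro k
    obtain ⟨hsum, heq⟩ := hnorm_eq k
    have h1 : ‖∑' j : Fin d → ℤ, u j * v (k - j)‖ ≤ (conv k).toReal := by
      rw [← heq]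
      exact norm_tsum_le_tsum_norm hsum
    have h2 : ‖∑' j : Fin d → ℤ, u j * v (k - j)‖ ^ 2 ≤ (conv k).toReal ^ 2 :=
      pow_le_pow_left₀ (norm_nonneg _) h1 2
    calc wt k * ‖∑' j : Fin d → ℤ, u j * v (k - j)‖ ^ 2
        ≤ wt k * (conv k).toReal ^ 2 := mul_le_mul_of_nonneg_left h2 (hwtpos k).le
      _ = (W k * conv k ^ 2).toReal := by
          rw [ENNReal.toReal_mul, ENNReal.toReal_pow, hW, ENNReal.toReal_ofReal (hwtpos k).le]
  have hStop : S ≠ ∞ :=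
    ne_top_of_le_ne_top (ENNReal.mul_ne_top hMtop (ENNReal.mul_ne_top hAtop hBtop)) hS
  have hmaj : Summable fun k : Fin d → ℤ => (W k * conv k ^ 2).toReal :=
    ENNReal.summable_toReal hStop
  have hsum2 : Summable (fun k : Fin d → ℤ =>
      wt k * ‖∑' j : Fin d → ℤ, u j * v (k - j)‖ ^ 2) :=
    Summable.of_nonneg_of_le (fun k => by positivity) hbound hmaj
  refine ⟨fun k => (hnorm_eq k).1, hsum2, ?_⟩
  have hAr : (0:ℝ) ≤ ∑' k, wt k * ‖u k‖ ^ 2 := tsum_nonneg fun k => by positivity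
  have hBr : (0:ℝ) ≤ ∑' k, wt k * ‖v k‖ ^ 2 := tsum_nonneg fun k => by positivity
  calc ∑' k, wt k * ‖∑' j : Fin d → ℤ, u j * v (k - j)‖ ^ 2
      ≤ ∑' k, (W k * conv k ^ 2).toReal := Summable.tsum_le_tsum hbound hsum2 hmaj
    _ = S.toReal := (ENNReal.tsum_toReal_eq
        (fun k => ENNReal.mul_ne_top (hWtop k) (ENNReal.pow_ne_top (hconv_top k)))).symm
    _ ≤ (M * (A * B)).toReal := ENNReal.toReal_mono
        (ENNReal.mul_ne_top hMtop (ENNReal.mul_ne_top hAtop hBtop)) hS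
    _ = M.toReal * ((∑' k, wt k * ‖u k‖ ^ 2) * (∑' k, wt k * ‖v k‖ ^ 2)) := by
        simp only [hM, hA_eq, hB_eq, ENNReal.toReal_mul,
          ENNReal.toReal_ofReal hAr, ENNReal.toReal_ofReal hBr]
    _ ≤ Real.sqrt (M.toReal + 1) ^ 2 * (∑' k, wt k * ‖u k‖ ^ 2) *
          (∑' k, wt k * ‖v k‖ ^ 2) := by
        rw [hCsq, mul_assoc]
        refine mul_le_mul_of_nonneg_right ?_ (mul_nonneg hAr hBr)
        linarith [ENNReal.toReal_nonneg (a := M)]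
end
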